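/- With W_1, W_2, W_3, W_4 and D as defined from positive integers a_1, a_2, a_3, a_4, the gcd of all four W_i equals gcd(W_i, W_{i+1}) for each i, and also equals gcd(W_i, D). -/

import Mathlib

theorem stmt_1 (a1 a2 a3 a4 : ℤ) (h1 : 0 < a1) (h2 : 0 < a2) (h3 : 0 < a3) (h4 : 0 < a4)
    (W1 W2 W3 W4 D : ℤ)
    (hW1 : W1 = a2*a3*a4 - a3*a4 + a4 - 1)
    (hW2 : W2 = a3*a4*a1 - a4*a1 + a1 - 1)
    (hW3 : W3 = a4*a1*a2 - a1*a2 + a2 - 1)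
    (hW4 : W4 = a1*a2*a3 - a2*a3 + a3 - 1)
    (hD : D = a1*a2*a3*a4 - 1)
    (g : ℕ) (hg : g = Int.gcd W1 (Int.gcd W2 (Int.gcd W3 W4))) :
    (g = Int.gcd W1 W2 ∧ g = Int.gcd W2 W3 ∧ g = Int.gcd W3 W4 ∧ g = Int.gcd W4 W1) ∧
    (g = Int.gcd W1 D ∧ g = Int.gcd W2 D ∧ g = Int.gcd W3 D ∧ g = Int.gcd W4 D) := by
  have e1 : W2 = D - a1 * W1 := by rw [hW1, hW2, hD]; ring
  have e2 : W3 = D - a2 * W2 := by rw [hW2, hW3, hD]; ring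
  have e3 : W4 = D - a3 * W3 := by rw [hW3, hW4, hD]; ring
  have e4 : W1 = D - a4 * W4 := by rw [hW4, hW1, hD]; ring
  have s1 : ∀ x : ℤ, x ∣ D → x ∣ W1 → x ∣ W2 := fun x hd h => by
    rw [e1]; exact dvd_sub hd (h.mul_left a1)
  have s2 : ∀ x : ℤ, x ∣ D → x ∣ W2 → x ∣ W3 := fun x hd h => by
    rw [e2]; exact dvd_sub hd (h.mul_left a2)
  have s3 : ∀ x : ℤ, x ∣ D → x ∣ W3 → x ∣ W4 := fun x hd h => by
    rw [e3]; exact dvd_sub hd (h.mul_left a3)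
  have s4 : ∀ x : ℤ, x ∣ D → x ∣ W4 → x ∣ W1 := fun x hd h => by
    rw [e4]; exact dvd_sub hd (h.mul_left a4)
  -- divisor of D and any one Wi divides all
  have all1 : ∀ x : ℤ, x ∣ D → x ∣ W1 → x ∣ W1 ∧ x ∣ W2 ∧ x ∣ W3 ∧ x ∣ W4 := fun x hd h =>
    ⟨h, s1 x hd h, s2 x hd (s1 x hd h), s3 x hd (s2 x hd (s1 x hd h))⟩
  have all2 : ∀ x : ℤ, x ∣ D → x ∣ W2 → x ∣ W1 ∧ x ∣ W2 ∧ x ∣ W3 ∧ x ∣ W4 := fun x hd h =>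
    ⟨s4 x hd (s3 x hd (s2 x hd h)), h, s2 x hd h, s3 x hd (s2 x hd h)⟩
  have all3 : ∀ x : ℤ, x ∣ D → x ∣ W3 → x ∣ W1 ∧ x ∣ W2 ∧ x ∣ W3 ∧ x ∣ W4 := fun x hd h =>
    ⟨s4 x hd (s3 x hd h), s1 x hd (s4 x hd (s3 x hd h)), h, s3 x hd h⟩
  have all4 : ∀ x : ℤ, x ∣ D → x ∣ W4 → x ∣ W1 ∧ x ∣ W2 ∧ x ∣ W3 ∧ x ∣ W4 := fun x hd h =>
    ⟨s4 x hd h, s1 x hd (s4 x hd h), s2 x hd (s1 x hd (s4 x hd h)), h⟩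
  -- (g:ℤ) divides all Wi and D
  have g1 : (g : ℤ) ∣ W1 := by rw [hg]; exact (Int.gcd_dvd_left _ _)
  have g2 : (g : ℤ) ∣ W2 := by
    rw [hg]; exact dvd_trans (Int.gcd_dvd_right _ _) (Int.gcd_dvd_left _ _)
  have g3 : (g : ℤ) ∣ W3 := by
    rw [hg]; exact dvd_trans (Int.gcd_dvd_right _ _) (dvd_trans (Int.gcd_dvd_right _ _) (Int.gcd_dvd_left _ _))
  have g4 : (g : ℤ) ∣ W4 := by
    rw [hg]; exact dvd_trans (Int.gcd_dvd_right _ _) (dvd_trans (Int.gcd_dvd_right _ _) (Int.gcd_dvd_right _ _))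
  have gD : (g : ℤ) ∣ D := by
    have : D = W2 + a1 * W1 := by rw [e1]; ring
    rw [this]; exact dvd_add g2 (g1.mul_left a1)
  -- any x dividing two suitable things divides g
  have dg : ∀ x : ℤ, x ∣ W1 → x ∣ W2 → x ∣ W3 → x ∣ W4 → x ∣ (g : ℤ) := by
    intro x x1 x2 x3 x4
    rw [hg]
    exact Int.dvd_coe_gcd x1 (Int.dvd_coe_gcd x2 (Int.dvd_coe_gcd x3 x4))
  -- D from a pair
  have dD12 : ∀ x : ℤ, x ∣ W1 → x ∣ W2 → x ∣ D := fun x x1 x2 => by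
    have : D = W2 + a1 * W1 := by rw [e1]; ring
    rw [this]; exact dvd_add x2 (x1.mul_left a1)
  have dD23 : ∀ x : ℤ, x ∣ W2 → x ∣ W3 → x ∣ D := fun x x1 x2 => by
    have : D = W3 + a2 * W2 := by rw [e2]; ring
    rw [this]; exact dvd_add x2 (x1.mul_left a2)
  have dD34 : ∀ x : ℤ, x ∣ W3 → x ∣ W4 → x ∣ D := fun x x1 x2 => by
    have : D = W4 + a3 * W3 := by rw [e3]; ring
    rw [this]; exact dvd_add x2 (x1.mul_left a3)
  have dD41 : ∀ x : ℤ, x ∣ W4 → x ∣ W1 → x ∣ D := fun x x1 x2 => by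
    have : D = W1 + a4 * W4 := by rw [e4]; ring
    rw [this]; exact dvd_add x2 (x1.mul_left a4)
  have cast : ∀ m n : ℕ, (m : ℤ) ∣ (n : ℤ) → (n : ℤ) ∣ (m : ℤ) → m = n := fun m n h h' =>
    Nat.dvd_antisymm (Int.natCast_dvd_natCast.mp h) (Int.natCast_dvd_natCast.mp h')
  have p12 : g = Int.gcd W1 W2 := by
    refine cast _ _ (Int.dvd_coe_gcd g1 g2) ?_
    have hd := dD12 _ (Int.gcd_dvd_left (a := W1) (b := W2)) (Int.gcd_dvd_right _ _)
    obtain ⟨x1, x2, x3, x4⟩ := all1 _ hd (Int.gcd_dvd_left _ _)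
    exact dg _ x1 x2 x3 x4
  have p23 : g = Int.gcd W2 W3 := by
    refine cast _ _ (Int.dvd_coe_gcd g2 g3) ?_
    have hd := dD23 _ (Int.gcd_dvd_left (a := W2) (b := W3)) (Int.gcd_dvd_right _ _)
    obtain ⟨x1, x2, x3, x4⟩ := all2 _ hd (Int.gcd_dvd_left _ _)
    exact dg _ x1 x2 x3 x4
  have p34 : g = Int.gcd W3 W4 := by
    refine cast _ _ (Int.dvd_coe_gcd g3 g4) ?_
    have hd := dD34 _ (Int.gcd_dvd_left (a := W3) (b := W4)) (Int.gcd_dvd_right _ _)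
    obtain ⟨x1, x2, x3, x4⟩ := all3 _ hd (Int.gcd_dvd_left _ _)
    exact dg _ x1 x2 x3 x4
  have p41 : g = Int.gcd W4 W1 := by
    refine cast _ _ (Int.dvd_coe_gcd g4 g1) ?_
    have hd := dD41 _ (Int.gcd_dvd_left (a := W4) (b := W1)) (Int.gcd_dvd_right _ _)
    obtain ⟨x1, x2, x3, x4⟩ := all4 _ hd (Int.gcd_dvd_left _ _)
    exact dg _ x1 x2 x3 x4
  have q1 : g = Int.gcd W1 D := by
    refine cast _ _ (Int.dvd_coe_gcd g1 gD) ?_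
    obtain ⟨x1, x2, x3, x4⟩ := all1 _ (Int.gcd_dvd_right (a := W1) (b := D)) (Int.gcd_dvd_left _ _)
    exact dg _ x1 x2 x3 x4
  have q2 : g = Int.gcd W2 D := by
    refine cast _ _ (Int.dvd_coe_gcd g2 gD) ?_
    obtain ⟨x1, x2, x3, x4⟩ := all2 _ (Int.gcd_dvd_right (a := W2) (b := D)) (Int.gcd_dvd_left _ _)
    exact dg _ x1 x2 x3 x4
  have q3 : g = Int.gcd W3 D := by
    refine cast _ _ (Int.dvd_coe_gcd g3 gD) ?_
    obtain ⟨x1, x2, x3, x4⟩ := all3 _ (Int.gcd_dvd_right (a := W3) (b := D)) (Int.gcd_dvd_left _ _)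
    exact dg _ x1 x2 x3 x4
  have q4 : g = Int.gcd W4 D := by
    refine cast _ _ (Int.dvd_coe_gcd g4 gD) ?_
    obtain ⟨x1, x2, x3, x4⟩ := all4 _ (Int.gcd_dvd_right (a := W4) (b := D)) (Int.gcd_dvd_left _ _)
    exact dg _ x1 x2 x3 x4
  exact ⟨⟨p12, p23, p34, p41⟩, ⟨q1, q2, q3, q4⟩⟩
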